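/- Let A be a 3-Lie algebra decomposing as A = A₁ ⊕ A₂ with [A₁, A₂, A] = 0. Then QΓ(A) = QΓ(A₁) + QΓ(A₂) + Γ₁ + Γ₂, where Γᵢ = {f ∈ Hom(Aᵢ, Aⱼ) : f(Aᵢ) ⊆ Z(Aⱼ)} for {i,j} = {1,2} (all maps extended by zero to A). -/

import Mathlib

/-- A 3-Lie algebra: a module with a trilinear skew-symmetric bracket
satisfying the fundamental identity. -/
structure ThreeLieAlgebra (F A : Type*) [Field F] [AddCommGroup A] [Module F A] where
  br : A →ₗ[F] A →ₗ[F] A →ₗ[F] A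
  skew₁₂ : ∀ x y z, br x y z = - br y x z
  skew₂₃ : ∀ x y z, br x y z = - br x z y
  fund : ∀ x₁ x₂ x₃ y₂ y₃,
    br (br x₁ x₂ x₃) y₂ y₃ =
      br (br x₁ y₂ y₃) x₂ x₃ + br x₁ (br x₂ y₂ y₃) x₃ + br x₁ x₂ (br x₃ y₂ y₃)

variable {F A : Type*} [Field F] [AddCommGroup A] [Module F A]

/-- `(f₁, f₂, f₃, f') ∈ Δ(A)`. -/
def IsDelta (L : ThreeLieAlgebra F A) (f₁ f₂ f₃ f' : A →ₗ[F] A) : Prop :=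
  ∀ x y z, L.br (f₁ x) y z + L.br x (f₂ y) z + L.br x y (f₃ z) = f' (L.br x y z)

/-- membership in the quasicentroid QΓ(A). -/
def InQC (L : ThreeLieAlgebra F A) (f : A →ₗ[F] A) : Prop :=
  ∀ x y z, L.br (f x) y z = L.br x (f y) z ∧ L.br x (f y) z = L.br x y (f z)

/-- membership in the centroid Γ(A). -/
def InC (L : ThreeLieAlgebra F A) (f : A →ₗ[F] A) : Prop :=
  ∀ x y z, L.br (f x) y z = f (L.br x y z) ∧ L.br x (f y) z = f (L.br x y z) ∧
    L.br x y (f z) = f (L.br x y z)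

section Aux

lemma ThreeLieAlgebra.cyc (L : ThreeLieAlgebra F A) (x y z : A) :
    L.br x y z = L.br z x y := by
  rw [L.skew₂₃ x y z, L.skew₁₂ x z y, neg_neg]

section Mix

variable {L : ThreeLieAlgebra F A} {A₁ A₂ : Submodule F A}
  (hmix : ∀ x ∈ A₁, ∀ y ∈ A₂, ∀ z : A, L.br x y z = 0)

include hmix

lemma mix₁₂ {x y : A} (hx : x ∈ A₁) (hy : y ∈ A₂) (z : A) : L.br x y z = 0 :=
  hmix x hx y hy z

lemma mix₂₁ {x y : A} (hx : x ∈ A₂) (hy : y ∈ A₁) (z : A) : L.br x y z = 0 := by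
  rw [L.skew₁₂, hmix y hy x hx z, neg_zero]

lemma mix₁₃ {x z : A} (hx : x ∈ A₁) (hz : z ∈ A₂) (y : A) : L.br x y z = 0 := by
  rw [L.skew₂₃, hmix x hx z hz y, neg_zero]

lemma mix₃₁ {x z : A} (hx : x ∈ A₂) (hz : z ∈ A₁) (y : A) : L.br x y z = 0 := by
  rw [L.skew₂₃, mix₂₁ hmix hx hz y, neg_zero]

lemma mix₂₃ {y z : A} (hy : y ∈ A₁) (hz : z ∈ A₂) (x : A) : L.br x y z = 0 := by
  rw [L.cyc, mix₃₁ hmix hz hy x]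

lemma mix₃₂ {y z : A} (hy : y ∈ A₂) (hz : z ∈ A₁) (x : A) : L.br x y z = 0 := by
  rw [L.cyc, mix₁₃ hmix hz hy x]

end Mix

/-- the quasicentroid condition at a triple. -/
def QPred (L : ThreeLieAlgebra F A) (g : A →ₗ[F] A) (x y z : A) : Prop :=
  L.br (g x) y z = L.br x (g y) z ∧ L.br x (g y) z = L.br x y (g z)

lemma QPred.add₁ {L : ThreeLieAlgebra F A} {g : A →ₗ[F] A} {x x' y z : A}
    (h : QPred L g x y z) (h' : QPred L g x' y z) : QPred L g (x + x') y z := by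
  obtain ⟨a1, a2⟩ := h; obtain ⟨b1, b2⟩ := h'
  refine ⟨?_, ?_⟩ <;> simp only [map_add, LinearMap.add_apply]
  · rw [a1, b1]
  · rw [a2, b2]

lemma QPred.add₂ {L : ThreeLieAlgebra F A} {g : A →ₗ[F] A} {x y y' z : A}
    (h : QPred L g x y z) (h' : QPred L g x y' z) : QPred L g x (y + y') z := by
  obtain ⟨a1, a2⟩ := h; obtain ⟨b1, b2⟩ := h'
  refine ⟨?_, ?_⟩ <;> simp only [map_add, LinearMap.add_apply]
  · rw [a1, b1]
  · rw [a2, b2]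

lemma QPred.add₃ {L : ThreeLieAlgebra F A} {g : A →ₗ[F] A} {x y z z' : A}
    (h : QPred L g x y z) (h' : QPred L g x y z') : QPred L g x y (z + z') := by
  obtain ⟨a1, a2⟩ := h; obtain ⟨b1, b2⟩ := h'
  refine ⟨?_, ?_⟩ <;> simp only [map_add, LinearMap.add_apply]
  · rw [a1, b1]
  · rw [a2, b2]

end Aux

theorem stmt19 (L : ThreeLieAlgebra F A) (h2 : (2 : F) ≠ 0) (h3 : (3 : F) ≠ 0)
    (A₁ A₂ : Submodule F A) (hcompl : IsCompl A₁ A₂)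
    (hsub₁ : ∀ x ∈ A₁, ∀ y ∈ A₁, ∀ z ∈ A₁, L.br x y z ∈ A₁)
    (hsub₂ : ∀ x ∈ A₂, ∀ y ∈ A₂, ∀ z ∈ A₂, L.br x y z ∈ A₂)
    (hmix : ∀ x ∈ A₁, ∀ y ∈ A₂, ∀ z : A, L.br x y z = 0)
    (g : A →ₗ[F] A) :
    InQC L g ↔
      ∃ g₁ g₂ h₁ h₂ : A →ₗ[F] A,
        g = g₁ + g₂ + h₁ + h₂ ∧
        ((∀ x ∈ A₁, g₁ x ∈ A₁) ∧ (∀ x ∈ A₂, g₁ x = 0) ∧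
          ∀ x ∈ A₁, ∀ y ∈ A₁, ∀ z ∈ A₁,
            L.br (g₁ x) y z = L.br x (g₁ y) z ∧ L.br x (g₁ y) z = L.br x y (g₁ z)) ∧
        ((∀ x ∈ A₂, g₂ x ∈ A₂) ∧ (∀ x ∈ A₁, g₂ x = 0) ∧
          ∀ x ∈ A₂, ∀ y ∈ A₂, ∀ z ∈ A₂,
            L.br (g₂ x) y z = L.br x (g₂ y) z ∧ L.br x (g₂ y) z = L.br x y (g₂ z)) ∧
        ((∀ x ∈ A₁, h₁ x ∈ A₂ ∧ ∀ y ∈ A₂, ∀ z ∈ A₂, L.br (h₁ x) y z = 0) ∧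
          ∀ x ∈ A₂, h₁ x = 0) ∧
        ((∀ x ∈ A₂, h₂ x ∈ A₁ ∧ ∀ y ∈ A₁, ∀ z ∈ A₁, L.br (h₂ x) y z = 0) ∧
          ∀ x ∈ A₁, h₂ x = 0) := by
  set p₁ : A →ₗ[F] A := A₁.subtype ∘ₗ A₁.projectionOnto A₂ hcompl with hp₁def
  set p₂ : A →ₗ[F] A := A₂.subtype ∘ₗ A₂.projectionOnto A₁ hcompl.symm with hp₂def
  have hp₁m : ∀ x : A, p₁ x ∈ A₁ := fun x => (A₁.projectionOnto A₂ hcompl x).2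
  have hp₂m : ∀ x : A, p₂ x ∈ A₂ := fun x => (A₂.projectionOnto A₁ hcompl.symm x).2
  have hpsum : ∀ x : A, p₁ x + p₂ x = x := fun x =>
    Submodule.projection_add_projection_eq_self hcompl x
  have hp₁l : ∀ x ∈ A₁, p₁ x = x := fun x hx =>
    congrArg Subtype.val (Submodule.linearProjOfIsCompl_apply_left hcompl ⟨x, hx⟩)
  have hp₁r : ∀ x ∈ A₂, p₁ x = 0 := fun x hx => by
    simp [hp₁def, Submodule.projectionOnto_apply_of_mem_right hcompl hx]
  have hp₂l : ∀ x ∈ A₂, p₂ x = x := fun x hx =>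
    congrArg Subtype.val (Submodule.linearProjOfIsCompl_apply_left hcompl.symm ⟨x, hx⟩)
  have hp₂r : ∀ x ∈ A₁, p₂ x = 0 := fun x hx => by
    simp [hp₂def, Submodule.projectionOnto_apply_of_mem_right hcompl.symm hx]
  have brsplit : ∀ u v w₂ w₃ : A,
      L.br (p₁ u + p₂ u) w₂ w₃ = L.br (p₁ u) w₂ w₃ + L.br (p₂ u) w₂ w₃ := by
    intro u v w₂ w₃; simp [map_add]
  constructor
  · intro hg
    refine ⟨p₁ ∘ₗ g ∘ₗ p₁, p₂ ∘ₗ g ∘ₗ p₂, p₂ ∘ₗ g ∘ₗ p₁, p₁ ∘ₗ g ∘ₗ p₂, ?_, ?_, ?_, ?_, ?_⟩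
    · ext x
      simp only [LinearMap.add_apply, LinearMap.comp_apply]
      calc g x = g (p₁ x + p₂ x) := by rw [hpsum]
        _ = g (p₁ x) + g (p₂ x) := by rw [map_add]
        _ = (p₁ (g (p₁ x)) + p₂ (g (p₁ x))) + (p₁ (g (p₂ x)) + p₂ (g (p₂ x))) := by
            rw [hpsum, hpsum]
        _ = p₁ (g (p₁ x)) + p₂ (g (p₂ x)) + p₂ (g (p₁ x)) + p₁ (g (p₂ x)) := by abel
    · refine ⟨fun x _ => hp₁m _, fun x hx => by
        simp [LinearMap.comp_apply, hp₁r x hx], ?_⟩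
      intro x hx y hy z hz
      simp only [LinearMap.comp_apply, hp₁l x hx, hp₁l y hy, hp₁l z hz]
      have e1 : L.br (p₁ (g x)) y z = L.br (g x) y z := by
        conv_rhs => rw [← hpsum (g x)]
        rw [brsplit _ 0, mix₂₁ hmix (hp₂m (g x)) hy, add_zero]
      have e2 : L.br x (p₁ (g y)) z = L.br x (g y) z := by
        conv_rhs => rw [← hpsum (g y)]
        simp only [map_add, LinearMap.add_apply, mix₁₂ hmix hx (hp₂m (g y)), add_zero]
      have e3 : L.br x y (p₁ (g z)) = L.br x y (g z) := by
        conv_rhs => rw [← hpsum (g z)]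
        simp only [map_add, mix₂₃ hmix hy (hp₂m (g z)), add_zero]
      exact ⟨by rw [e1, e2]; exact (hg x y z).1, by rw [e2, e3]; exact (hg x y z).2⟩
    · refine ⟨fun x _ => hp₂m _, fun x hx => by
        simp [LinearMap.comp_apply, hp₂r x hx], ?_⟩
      intro x hx y hy z hz
      simp only [LinearMap.comp_apply, hp₂l x hx, hp₂l y hy, hp₂l z hz]
      have e1 : L.br (p₂ (g x)) y z = L.br (g x) y z := by
        conv_rhs => rw [← hpsum (g x)]
        rw [brsplit _ 0, mix₁₂ hmix (hp₁m (g x)) hy, zero_add]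
      have e2 : L.br x (p₂ (g y)) z = L.br x (g y) z := by
        conv_rhs => rw [← hpsum (g y)]
        simp only [map_add, LinearMap.add_apply, mix₂₁ hmix hx (hp₁m (g y)), zero_add]
      have e3 : L.br x y (p₂ (g z)) = L.br x y (g z) := by
        conv_rhs => rw [← hpsum (g z)]
        simp only [map_add, mix₃₂ hmix hy (hp₁m (g z)), zero_add]
      exact ⟨by rw [e1, e2]; exact (hg x y z).1, by rw [e2, e3]; exact (hg x y z).2⟩
    · refine ⟨fun x hx => ⟨by simp only [LinearMap.comp_apply]; exact hp₂m _, ?_⟩,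
        fun x hx => by simp [LinearMap.comp_apply, hp₁r x hx]⟩
      intro y hy z hz
      simp only [LinearMap.comp_apply, hp₁l x hx]
      have e : L.br (g x) y z = 0 := by
        rw [(hg x y z).1, mix₁₃ hmix hx hz (g y)]
      calc L.br (p₂ (g x)) y z
          = L.br (p₁ (g x)) y z + L.br (p₂ (g x)) y z := by
            rw [mix₁₂ hmix (hp₁m (g x)) hy z, zero_add]
        _ = L.br (p₁ (g x) + p₂ (g x)) y z := (brsplit _ 0 y z).symm
        _ = L.br (g x) y z := by rw [hpsum]
        _ = 0 := e
    · refine ⟨fun x hx => ⟨by simp only [LinearMap.comp_apply]; exact hp₁m _, ?_⟩,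
        fun x hx => by simp [LinearMap.comp_apply, hp₂r x hx]⟩
      intro y hy z hz
      simp only [LinearMap.comp_apply, hp₂l x hx]
      have e : L.br (g x) y z = 0 := by
        rw [(hg x y z).1, mix₃₁ hmix hx hz (g y)]
      calc L.br (p₁ (g x)) y z
          = L.br (p₁ (g x)) y z + L.br (p₂ (g x)) y z := by
            rw [mix₂₁ hmix (hp₂m (g x)) hy z, add_zero]
        _ = L.br (p₁ (g x) + p₂ (g x)) y z := (brsplit _ 0 y z).symm
        _ = L.br (g x) y z := by rw [hpsum]
        _ = 0 := e
  · rintro ⟨g₁, g₂, h₁, h₂, hsumg, ⟨hg₁m, hg₁z, hg₁q⟩, ⟨hg₂m, hg₂z, hg₂q⟩,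
      ⟨hh₁, hh₁z⟩, ⟨hh₂, hh₂z⟩⟩
    have hh₁m : ∀ x ∈ A₁, h₁ x ∈ A₂ := fun x hx => (hh₁ x hx).1
    have hh₁c : ∀ x ∈ A₁, ∀ y ∈ A₂, ∀ z ∈ A₂, L.br (h₁ x) y z = 0 :=
      fun x hx => (hh₁ x hx).2
    have hh₂m : ∀ x ∈ A₂, h₂ x ∈ A₁ := fun x hx => (hh₂ x hx).1
    have hh₂c : ∀ x ∈ A₂, ∀ y ∈ A₁, ∀ z ∈ A₁, L.br (h₂ x) y z = 0 :=
      fun x hx => (hh₂ x hx).2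
    have c₁a : ∀ x ∈ A₁, ∀ u ∈ A₂, ∀ v ∈ A₂, L.br u (h₁ x) v = 0 := by
      intro x hx u hu v hv; rw [L.skew₁₂, hh₁c x hx u hu v hv, neg_zero]
    have c₁b : ∀ x ∈ A₁, ∀ u ∈ A₂, ∀ v ∈ A₂, L.br u v (h₁ x) = 0 := by
      intro x hx u hu v hv; rw [L.cyc, hh₁c x hx u hu v hv]
    have c₂a : ∀ x ∈ A₂, ∀ u ∈ A₁, ∀ v ∈ A₁, L.br u (h₂ x) v = 0 := by
      intro x hx u hu v hv; rw [L.skew₁₂, hh₂c x hx u hu v hv, neg_zero]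
    have c₂b : ∀ x ∈ A₂, ∀ u ∈ A₁, ∀ v ∈ A₁, L.br u v (h₂ x) = 0 := by
      intro x hx u hu v hv; rw [L.cyc, hh₂c x hx u hu v hv]
    have hgA₁ : ∀ x ∈ A₁, g x = g₁ x + h₁ x := by
      intro x hx
      rw [hsumg]
      simp [LinearMap.add_apply, hg₂z x hx, hh₂z x hx]
    have hgA₂ : ∀ x ∈ A₂, g x = g₂ x + h₂ x := by
      intro x hx
      rw [hsumg]
      simp [LinearMap.add_apply, hg₁z x hx, hh₁z x hx]
    have base : ∀ {x y z : A}, (x ∈ A₁ ∨ x ∈ A₂) → (y ∈ A₁ ∨ y ∈ A₂) →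
        (z ∈ A₁ ∨ z ∈ A₂) → QPred L g x y z := by
      intro x y z hx hy hz
      rcases hx with hx | hx <;> rcases hy with hy | hy <;> rcases hz with hz | hz
      -- case 1 1 1
      · constructor
        · rw [hgA₁ x hx, hgA₁ y hy]
          simp only [map_add, LinearMap.add_apply,
            mix₂₁ hmix (hh₁m x hx) hy, mix₁₂ hmix hx (hh₁m y hy), add_zero]
          exact (hg₁q x hx y hy z hz).1
        · rw [hgA₁ y hy, hgA₁ z hz]
          simp only [map_add, LinearMap.add_apply,
            mix₁₂ hmix hx (hh₁m y hy), mix₂₃ hmix hy (hh₁m z hz), add_zero]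
          exact (hg₁q x hx y hy z hz).2
      -- case 1 1 2
      · have E1 : L.br (g x) y z = 0 := by
          rw [hgA₁ x hx]
          simp only [map_add, LinearMap.add_apply,
            mix₁₃ hmix (hg₁m x hx) hz, mix₂₁ hmix (hh₁m x hx) hy, add_zero]
        have E2 : L.br x (g y) z = 0 := mix₁₃ hmix hx hz (g y)
        have E3 : L.br x y (g z) = 0 := by
          rw [hgA₂ z hz]
          simp only [map_add, mix₁₃ hmix hx (hg₂m z hz), c₂b z hz x hx y hy, add_zero]
        exact ⟨E1.trans E2.symm, E2.trans E3.symm⟩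
      -- case 1 2 1
      · have E1 : L.br (g x) y z = 0 := by
          rw [hgA₁ x hx]
          simp only [map_add, LinearMap.add_apply,
            mix₁₂ hmix (hg₁m x hx) hy, mix₃₁ hmix (hh₁m x hx) hz, add_zero]
        have E2 : L.br x (g y) z = 0 := by
          rw [hgA₂ y hy]
          simp only [map_add, LinearMap.add_apply,
            mix₁₂ hmix hx (hg₂m y hy), c₂a y hy x hx z hz, add_zero]
        have E3 : L.br x y (g z) = 0 := mix₁₂ hmix hx hy (g z)
        exact ⟨E1.trans E2.symm, E2.trans E3.symm⟩
      -- case 1 2 2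
      · have E1 : L.br (g x) y z = 0 := by
          rw [hgA₁ x hx]
          simp only [map_add, LinearMap.add_apply,
            mix₁₂ hmix (hg₁m x hx) hy, hh₁c x hx y hy z hz, add_zero]
        have E2 : L.br x (g y) z = 0 := mix₁₃ hmix hx hz (g y)
        have E3 : L.br x y (g z) = 0 := mix₁₂ hmix hx hy (g z)
        exact ⟨E1.trans E2.symm, E2.trans E3.symm⟩
      -- case 2 1 1
      · have E1 : L.br (g x) y z = 0 := by
          rw [hgA₂ x hx]
          simp only [map_add, LinearMap.add_apply,
            mix₂₁ hmix (hg₂m x hx) hy, hh₂c x hx y hy z hz, add_zero]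
        have E2 : L.br x (g y) z = 0 := mix₃₁ hmix hx hz (g y)
        have E3 : L.br x y (g z) = 0 := mix₂₁ hmix hx hy (g z)
        exact ⟨E1.trans E2.symm, E2.trans E3.symm⟩
      -- case 2 1 2
      · have E1 : L.br (g x) y z = 0 := by
          rw [hgA₂ x hx]
          simp only [map_add, LinearMap.add_apply,
            mix₂₁ hmix (hg₂m x hx) hy, mix₁₃ hmix (hh₂m x hx) hz, add_zero]
        have E2 : L.br x (g y) z = 0 := by
          rw [hgA₁ y hy]
          simp only [map_add, LinearMap.add_apply,
            mix₂₁ hmix hx (hg₁m y hy), c₁a y hy x hx z hz, add_zero]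
        have E3 : L.br x y (g z) = 0 := mix₂₁ hmix hx hy (g z)
        exact ⟨E1.trans E2.symm, E2.trans E3.symm⟩
      -- case 2 2 1
      · have E1 : L.br (g x) y z = 0 := by
          rw [hgA₂ x hx]
          simp only [map_add, LinearMap.add_apply,
            mix₃₁ hmix (hg₂m x hx) hz, mix₁₂ hmix (hh₂m x hx) hy, add_zero]
        have E2 : L.br x (g y) z = 0 := mix₃₁ hmix hx hz (g y)
        have E3 : L.br x y (g z) = 0 := by
          rw [hgA₁ z hz]
          simp only [map_add, mix₃₁ hmix hx (hg₁m z hz), c₁b z hz x hx y hy, add_zero]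
        exact ⟨E1.trans E2.symm, E2.trans E3.symm⟩
      -- case 2 2 2
      · constructor
        · rw [hgA₂ x hx, hgA₂ y hy]
          simp only [map_add, LinearMap.add_apply,
            mix₁₂ hmix (hh₂m x hx) hy, mix₂₁ hmix hx (hh₂m y hy), add_zero]
          exact (hg₂q x hx y hy z hz).1
        · rw [hgA₂ y hy, hgA₂ z hz]
          simp only [map_add, LinearMap.add_apply,
            mix₂₁ hmix hx (hh₂m y hy), mix₃₂ hmix hy (hh₂m z hz), add_zero]
          exact (hg₂q x hx y hy z hz).2
    intro x y z
    have l : ∀ u : A, p₁ u ∈ A₁ ∨ p₁ u ∈ A₂ := fun u => Or.inl (hp₁m u)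
    have r : ∀ u : A, p₂ u ∈ A₁ ∨ p₂ u ∈ A₂ := fun u => Or.inr (hp₂m u)
    have q : QPred L g (p₁ x + p₂ x) (p₁ y + p₂ y) (p₁ z + p₂ z) :=
      QPred.add₁
        (QPred.add₂ (QPred.add₃ (base (l x) (l y) (l z)) (base (l x) (l y) (r z)))
          (QPred.add₃ (base (l x) (r y) (l z)) (base (l x) (r y) (r z))))
        (QPred.add₂ (QPred.add₃ (base (r x) (l y) (l z)) (base (r x) (l y) (r z)))
          (QPred.add₃ (base (r x) (r y) (l z)) (base (r x) (r y) (r z))))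
    rw [hpsum x, hpsum y, hpsum z] at q
    exact q
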